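/- Let G be the group of invertible block matrices [[1_k, B],[0, T]] with T diagonal invertible, and let E = [[1_k, C],[0, D]] be an idempotent (D diagonal idempotent, C·D = 0). Then the orbit {g·E·g⁻¹ : g ∈ G} equals the set of all idempotents [[1_k, B],[0, D]] with B·D = 0; i.e., two idempotents of this form are G-conjugate if and only if they have the same diagonal block D. -/
import Mathlib

open Matrix

lemma blk_mul {k m : ℕ} (B B' : Matrix (Fin k) (Fin m) ℂ) (t t' : Fin m → ℂ) :
    fromBlocks (1 : Matrix (Fin k) (Fin k) ℂ) B 0 (diagonal t) *
      fromBlocks (1 : Matrix (Fin k) (Fin k) ℂ) B' 0 (diagonal t') =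
    fromBlocks (1 : Matrix (Fin k) (Fin k) ℂ) (B' + B * diagonal t') 0 (diagonal (t * t')) := by
  rw [Matrix.fromBlocks_multiply]
  simp [Matrix.diagonal_mul_diagonal]

lemma blk_eq_one {k m : ℕ} (B : Matrix (Fin k) (Fin m) ℂ) (t : Fin m → ℂ)
    (hB : B = 0) (ht : diagonal t = 1) :
    fromBlocks (1 : Matrix (Fin k) (Fin k) ℂ) B 0 (diagonal t) = 1 := by
  rw [hB, ht]; exact Matrix.fromBlocks_one

lemma blk_inv {k m : ℕ} (B : Matrix (Fin k) (Fin m) ℂ) (t : Fin m → ℂ)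
    (ht : ∀ i, t i ≠ 0) :
    fromBlocks (1 : Matrix (Fin k) (Fin k) ℂ) B 0 (diagonal t) *
      fromBlocks (1 : Matrix (Fin k) (Fin k) ℂ) (-(B * diagonal (fun i => (t i)⁻¹))) 0
        (diagonal (fun i => (t i)⁻¹)) = 1 ∧
    fromBlocks (1 : Matrix (Fin k) (Fin k) ℂ) (-(B * diagonal (fun i => (t i)⁻¹))) 0
        (diagonal (fun i => (t i)⁻¹)) *
      fromBlocks (1 : Matrix (Fin k) (Fin k) ℂ) B 0 (diagonal t) = 1 := by
  constructor <;> rw [blk_mul] <;> apply blk_eq_one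
  · simp
  · have h4 : (t * fun i => (t i)⁻¹) = fun _ => (1 : ℂ) := by
      funext i; exact mul_inv_cancel₀ (ht i)
    rw [h4]; exact Matrix.diagonal_one
  · rw [Matrix.neg_mul, Matrix.mul_assoc, Matrix.diagonal_mul_diagonal]
    have h4 : (fun i => (t i)⁻¹ * t i) = fun _ => (1 : ℂ) := by
      funext i; exact inv_mul_cancel₀ (ht i)
    rw [h4]
    rw [Matrix.diagonal_one, Matrix.mul_one]
    simp
  · have h4 : ((fun i => (t i)⁻¹) * t) = fun _ => (1 : ℂ) := by
      funext i; exact inv_mul_cancel₀ (ht i)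
    rw [h4]; exact Matrix.diagonal_one

theorem stmt11 (k m : ℕ) (C : Matrix (Fin k) (Fin m) ℂ) (d : Fin m → ℂ)
    (hd : ∀ i, d i = 0 ∨ d i = 1) (hC : C * Matrix.diagonal d = 0) :
    {X : Matrix (Fin k ⊕ Fin m) (Fin k ⊕ Fin m) ℂ |
        ∃ g : (Matrix (Fin k ⊕ Fin m) (Fin k ⊕ Fin m) ℂ)ˣ,
          (∃ (B : Matrix (Fin k) (Fin m) ℂ) (t : Fin m → ℂ), (∀ i, t i ≠ 0) ∧
            (g : Matrix (Fin k ⊕ Fin m) (Fin k ⊕ Fin m) ℂ) =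
              Matrix.fromBlocks 1 B 0 (Matrix.diagonal t)) ∧
          X = (g : Matrix (Fin k ⊕ Fin m) (Fin k ⊕ Fin m) ℂ) *
            Matrix.fromBlocks 1 C 0 (Matrix.diagonal d) *
            ((g⁻¹ : (Matrix (Fin k ⊕ Fin m) (Fin k ⊕ Fin m) ℂ)ˣ) :
              Matrix (Fin k ⊕ Fin m) (Fin k ⊕ Fin m) ℂ)} =
    {X | ∃ B : Matrix (Fin k) (Fin m) ℂ, B * Matrix.diagonal d = 0 ∧
        X = Matrix.fromBlocks 1 B 0 (Matrix.diagonal d)} := by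
  have hone : Matrix.diagonal (fun _ : Fin m => (1 : ℂ)) = 1 := Matrix.diagonal_one
  have hCe : ∀ i j, C i j * d j = 0 := by
    intro i j
    have := congrFun (congrFun hC i) j
    simpa [Matrix.mul_diagonal] using this
  ext X
  simp only [Set.mem_setOf_eq]
  constructor
  · rintro ⟨g, ⟨B, t, ht, hg⟩, rfl⟩
    set ti : Fin m → ℂ := fun i => (t i)⁻¹ with hti
    have hinv := blk_inv B t ht
    have hginv : ((g⁻¹ : _ˣ) : Matrix (Fin k ⊕ Fin m) (Fin k ⊕ Fin m) ℂ) =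
        fromBlocks 1 (-(B * diagonal ti)) 0 (diagonal ti) := by
      have h1 : ((g⁻¹ : _ˣ) : Matrix (Fin k ⊕ Fin m) (Fin k ⊕ Fin m) ℂ) * (g : Matrix _ _ ℂ) = 1 := by
        rw [← Units.val_mul, inv_mul_cancel]; rfl
      calc ((g⁻¹ : _ˣ) : Matrix (Fin k ⊕ Fin m) (Fin k ⊕ Fin m) ℂ)
          = ((g⁻¹ : _ˣ) : Matrix (Fin k ⊕ Fin m) (Fin k ⊕ Fin m) ℂ) *
            ((g : Matrix _ _ ℂ) * fromBlocks 1 (-(B * diagonal ti)) 0 (diagonal ti)) := by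
            rw [hg, hinv.1, Matrix.mul_one]
        _ = _ := by rw [← Matrix.mul_assoc, h1, Matrix.one_mul]
    rw [hg, hginv]
    have htdti : t * d * ti = d := by
      funext i; simp only [Pi.mul_apply, hti]
      rw [mul_comm (t i) (d i), mul_assoc, mul_inv_cancel₀ (ht i), mul_one]
    refine ⟨-(B * diagonal ti) + (C + B * diagonal d) * diagonal ti, ?_, ?_⟩
    · ext i j
      simp only [Matrix.mul_diagonal, Matrix.add_apply, Matrix.neg_apply, Matrix.zero_apply]
      rcases hd j with h | h
      · rw [h]; ring
      · have hc := hCe i j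
        rw [h, mul_one] at hc
        rw [h, hc]; ring
    · rw [blk_mul, blk_mul, htdti]
  · rintro ⟨B, hB, rfl⟩
    have hCB : (C - B) * diagonal d = 0 := by
      rw [Matrix.sub_mul, hC, hB, sub_zero]
    refine ⟨⟨fromBlocks 1 (C - B) 0 (diagonal fun _ => 1),
        fromBlocks 1 (B - C) 0 (diagonal fun _ => 1), ?_, ?_⟩,
      ⟨C - B, fun _ => 1, fun _ => one_ne_zero, rfl⟩, ?_⟩
    · rw [blk_mul]
      apply blk_eq_one
      · rw [hone, Matrix.mul_one]; abel
      · rw [show ((fun _ : Fin m => (1:ℂ)) * fun _ => 1) = fun _ => (1:ℂ) by funext i; simp]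
        exact Matrix.diagonal_one
    · rw [blk_mul]
      apply blk_eq_one
      · rw [hone, Matrix.mul_one]; abel
      · rw [show ((fun _ : Fin m => (1:ℂ)) * fun _ => 1) = fun _ => (1:ℂ) by funext i; simp]
        exact Matrix.diagonal_one
    · show fromBlocks 1 B 0 (diagonal d) =
        fromBlocks 1 (C - B) 0 (diagonal fun _ => 1) * fromBlocks 1 C 0 (diagonal d) *
          fromBlocks 1 (B - C) 0 (diagonal fun _ => 1)
      rw [blk_mul, blk_mul]
      have e1 : B - C + (C + (C - B) * diagonal d) * diagonal (fun _ : Fin m => (1:ℂ)) = B := by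
        rw [hone, Matrix.mul_one, hCB]; abel
      have e2 : ((fun _ : Fin m => (1:ℂ)) * d * fun _ => 1) = d := by
        funext i; simp
      rw [e1, e2]
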